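/- arXiv:1004.1703 — 4 statements merged into one kernel-verified Lean document; each statement's English description precedes it below -/
import Mathlib

section
/- Let K be a finite group, H a normal subgroup of K such that K/H is cyclic, and A a divisible abelian group. Let (Ĥ, ι, π) be a central A-extension of H and let φ : K → Aut(Ĥ) be an action of K on Ĥ that lifts the conjugation action of K on H, fixes A pointwise, and is inner-compatible. Assume there is a cyclic subgroup C of K with K = H·C and, setting D = C ∩ H, a homomorphism θ : D → Ĥ with π ∘ θ equal to the inclusion of D into H, whose image θ(D) is fixed pointwise by φ_c for every c ∈ C. Then the set Δ*(D) = {(θ(y), y⁻¹) : y ∈ D} is a central (hence normal) subgroup of the semidirect product Ĥ ⋊_φ C, and the quotient K̂ = (Ĥ ⋊_φ C)/Δ*(D), together with the homomorphism j : Ĥ → K̂ induced by ĥ ↦ (ĥ, 1) and the homomorphism p : K̂ → K induced by (ĥ, c) ↦ π(ĥ)·c, is a central A-extension of K containing Ĥ, lifting the inclusion H → K, whose conjugation action induces φ; that is: j is injective, p is surjective, p ∘ j = (inclusion H → K) ∘ π, the kernel of p equals j(ι(A)) and is contained in the center of K̂, and x̂·j(ĥ)·x̂⁻¹ = j(φ_{p(x̂)}(ĥ))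 for all x̂ ∈ K̂ and ĥ ∈ Ĥ. -/
set_option maxHeartbeats 2000000 in
/-- Existence part of Lemma 4.10: construction of the central `A`-extension `K̂` of `K`
containing `Hhat` as the quotient of the semidirect product `Hhat ⋊ C` by the central
"inverse diagonal" subgroup `Δ*(D)`. -/
theorem central_extension_of_cyclic_quotient_exists
    (K : Type*) [Group K] [Finite K]
    (H : Subgroup K) [H.Normal] (hcyc : IsCyclic (K ⧸ H))
    (A : Type*) [CommGroup A]
    (hdiv : ∀ (a : A) (n : ℕ), 0 < n → ∃ b : A, b ^ n = a)
    (Hhat : Type*) [Group Hhat]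
    (ι : A →* Hhat) (hι : Function.Injective ι)
    (hcent : ι.range ≤ Subgroup.center Hhat)
    (π : Hhat →* H) (hπ : Function.Surjective π)
    (hker : π.ker = ι.range)
    (φ : K →* MulAut Hhat)
    (hlift : ∀ (x : K) (h : Hhat), ((π (φ x h) : H) : K) = x * ((π h : H) : K) * x⁻¹)
    (hfixA : ∀ (x : K) (a : A), φ x (ι a) = ι a)
    (hinner : ∀ (h' h : Hhat), φ ((π h' : H) : K) h = h' * h * h'⁻¹)
    (C : Subgroup K) (hCcyc : IsCyclic C)
    (hKHC : ∀ x : K, ∃ h ∈ H, ∃ c ∈ C, x = h * c)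
    (θ : ↥(C ⊓ H) →* Hhat)
    (hθ : ∀ d : ↥(C ⊓ H), ((π (θ d) : H) : K) = (d : K))
    (hθfix : ∀ c ∈ C, ∀ d : ↥(C ⊓ H), φ c (θ d) = θ d) :
    ∃ Δ : Subgroup (Hhat ⋊[φ.comp C.subtype] C),
      (Δ : Set (Hhat ⋊[φ.comp C.subtype] C)) =
        {x | ∃ y : ↥(C ⊓ H),
          x = ⟨θ y, (Subgroup.inclusion inf_le_left y)⁻¹⟩} ∧
      Δ ≤ Subgroup.center (Hhat ⋊[φ.comp C.subtype] C) ∧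
      ∀ hN : Δ.Normal,
        haveI := hN
        ∃ p : (Hhat ⋊[φ.comp C.subtype] C) ⧸ Δ →* K,
          (∀ (h : Hhat) (c : C),
              p (QuotientGroup.mk (⟨h, c⟩ : Hhat ⋊[φ.comp C.subtype] C)) =
                ((π h : H) : K) * (c : K)) ∧
          Function.Injective ((QuotientGroup.mk' Δ).comp SemidirectProduct.inl) ∧
          Function.Surjective p ∧
          (∀ h : Hhat,
              p ((QuotientGroup.mk' Δ).comp SemidirectProduct.inl h) = ((π h : H) : K)) ∧
          p.ker = Subgroup.map ((QuotientGroup.mk' Δ).comp SemidirectProduct.inl) ι.range ∧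
          p.ker ≤ Subgroup.center ((Hhat ⋊[φ.comp C.subtype] C) ⧸ Δ) ∧
          (∀ (xhat : (Hhat ⋊[φ.comp C.subtype] C) ⧸ Δ) (h : Hhat),
              xhat * (QuotientGroup.mk' Δ).comp SemidirectProduct.inl h * xhat⁻¹ =
                (QuotientGroup.mk' Δ).comp SemidirectProduct.inl (φ (p xhat) h)) := by
  classical
  set ψ : C →* MulAut Hhat := φ.comp C.subtype with hψ
  set incl : ↥(C ⊓ H) →* C := Subgroup.inclusion inf_le_left with hincl
  -- commutativity in C
  obtain ⟨g, hg⟩ := hCcyc.exists_generator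
  have hCcomm : ∀ c c' : C, c * c' = c' * c := by
    intro c c'
    obtain ⟨m, hm⟩ := hg c
    obtain ⟨n, hn⟩ := hg c'
    rw [← hm, ← hn, ← zpow_add, ← zpow_add, add_comm]
  -- fixing facts
  have hθfix' : ∀ (c : C) (y : ↥(C ⊓ H)), φ (c : K) (θ y) = θ y :=
    fun c y => hθfix c c.2 y
  have cancel : ∀ (x : K) (a : Hhat), φ x⁻¹ (φ x a) = a := by
    intro x a
    have : φ x⁻¹ (φ x a) = (φ x⁻¹ * φ x) a := rfl
    rw [this, ← map_mul, inv_mul_cancel, map_one, MulAut.one_apply]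
  have key : ∀ (y : ↥(C ⊓ H)) (h : Hhat), φ ((y : K)) h = θ y * h * (θ y)⁻¹ := by
    intro y h
    rw [← hθ y]; exact hinner (θ y) h
  have keyinv : ∀ (y : ↥(C ⊓ H)) (h : Hhat), φ ((y : K))⁻¹ h = (θ y)⁻¹ * h * θ y := by
    intro y h
    have h2 : φ ((y : K)) ((θ y)⁻¹ * h * θ y) = h := by rw [key]; group
    calc φ ((y : K))⁻¹ h = φ ((y : K))⁻¹ (φ ((y : K)) ((θ y)⁻¹ * h * θ y)) := by rw [h2]
      _ = (θ y)⁻¹ * h * θ y := cancel _ _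
  -- the subgroup Δ
  have hψ_apply : ∀ (c : C) (a : Hhat), ψ c a = φ (c : K) a := fun _ _ => rfl
  have hmulmem : ∀ {a b : Hhat ⋊[φ.comp C.subtype] C},
      (∃ y : ↥(C ⊓ H), a = ⟨θ y, (incl y)⁻¹⟩) → (∃ y : ↥(C ⊓ H), b = ⟨θ y, (incl y)⁻¹⟩) →
      (∃ y : ↥(C ⊓ H), a * b = ⟨θ y, (incl y)⁻¹⟩) := by
    rintro a b ⟨y₁, rfl⟩ ⟨y₂, rfl⟩
    refine ⟨y₁ * y₂, ?_⟩
    refine SemidirectProduct.ext ?_ ?_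
    · show θ y₁ * ψ (incl y₁)⁻¹ (θ y₂) = θ (y₁ * y₂)
      rw [hψ_apply, ← map_inv, hθfix' _ y₂, ← map_mul]
    · show (incl y₁)⁻¹ * (incl y₂)⁻¹ = (incl (y₁ * y₂))⁻¹
      rw [map_mul, mul_inv_rev, hCcomm]
  have hinvmem : ∀ {a : Hhat ⋊[φ.comp C.subtype] C},
      (∃ y : ↥(C ⊓ H), a = ⟨θ y, (incl y)⁻¹⟩) →
      (∃ y : ↥(C ⊓ H), a⁻¹ = ⟨θ y, (incl y)⁻¹⟩) := by
    rintro a ⟨y, rfl⟩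
    refine ⟨y⁻¹, ?_⟩
    refine SemidirectProduct.ext ?_ ?_
    · show ψ (((incl y)⁻¹))⁻¹ (θ y)⁻¹ = θ y⁻¹
      rw [inv_inv, hψ_apply, map_inv, hθfix' _ y, ← map_inv]
    · show ((incl y)⁻¹)⁻¹ = (incl y⁻¹)⁻¹
      rw [map_inv, inv_inv]
  set Δ : Subgroup (Hhat ⋊[φ.comp C.subtype] C) :=
    { carrier := {x | ∃ y : ↥(C ⊓ H), x = ⟨θ y, (incl y)⁻¹⟩}
      one_mem' := ⟨1, by refine SemidirectProduct.ext ?_ ?_ <;> simp⟩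
      mul_mem' := hmulmem
      inv_mem' := hinvmem } with hΔ
  have hΔmem : ∀ {x : Hhat ⋊[φ.comp C.subtype] C},
      x ∈ Δ ↔ ∃ y : ↥(C ⊓ H), x = ⟨θ y, (incl y)⁻¹⟩ := fun {x} => Iff.rfl
  refine ⟨Δ, rfl, ?_, ?_⟩
  -- centrality
  · intro z hz
    obtain ⟨y, rfl⟩ := hΔmem.mp hz
    rw [Subgroup.mem_center_iff]
    rintro ⟨h, c⟩
    refine SemidirectProduct.ext ?_ ?_
    · show h * ψ c (θ y) = θ y * ψ (incl y)⁻¹ h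
      rw [hψ_apply, hψ_apply, hθfix' c y, ← map_inv, map_inv incl,
        Subgroup.coe_inv, Subgroup.coe_inclusion, keyinv]
      group
    · show c * (incl y)⁻¹ = (incl y)⁻¹ * c
      exact hCcomm _ _
  -- the quotient map p
  · intro hN
    haveI := hN
    have hcond : ∀ c : C, (H.subtype.comp π).comp ((φ.comp C.subtype) c).toMonoidHom =
        (MulAut.conj (C.subtype c)).toMonoidHom.comp (H.subtype.comp π) := by
      intro c
      ext h
      exact hlift (c : K) h
    set P : (Hhat ⋊[φ.comp C.subtype] C) →* K :=
      SemidirectProduct.lift (H.subtype.comp π) C.subtype hcond with hP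
    have hPmk : ∀ (h : Hhat) (c : C),
        P (⟨h, c⟩ : Hhat ⋊[φ.comp C.subtype] C) = ((π h : H) : K) * (c : K) := fun _ _ => rfl
    have hΔker : Δ ≤ P.ker := by
      intro x hx
      obtain ⟨y, rfl⟩ := hΔmem.mp hx
      show P _ = 1
      rw [hPmk, hθ y, Subgroup.coe_inv, Subgroup.coe_inclusion, mul_inv_cancel]
    refine ⟨QuotientGroup.lift _ P hΔker, ?_, ?_, ?_, ?_, ?_, ?_, ?_⟩
    · intro h c
      show P (⟨h, c⟩ : Hhat ⋊[φ.comp C.subtype] C) = _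
      exact hPmk h c
    · -- injectivity of j
      rw [injective_iff_map_eq_one]
      intro h hh
      have hmem : (SemidirectProduct.inl h : Hhat ⋊[φ.comp C.subtype] C) ∈ Δ :=
        (QuotientGroup.eq_one_iff _).mp hh
      obtain ⟨y, hy⟩ := hΔmem.mp hmem
      have hr : (1 : C) = (incl y)⁻¹ := congrArg SemidirectProduct.right hy
      have h1 : incl y = 1 := by
        have := congrArg Inv.inv hr
        rwa [inv_one, inv_inv, eq_comm] at this
      have hy1 : y = 1 :=
        Subgroup.inclusion_injective inf_le_left (by rw [map_one]; exact h1)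
      have hl : h = θ y := congrArg SemidirectProduct.left hy
      rw [hl, hy1, map_one]
    · -- surjectivity of p
      intro x
      obtain ⟨h, hh, c, hc, rfl⟩ := hKHC x
      obtain ⟨hhat, hhat_eq⟩ := hπ ⟨h, hh⟩
      refine ⟨QuotientGroup.mk (⟨hhat, ⟨c, hc⟩⟩ : Hhat ⋊[φ.comp C.subtype] C), ?_⟩
      show P (⟨hhat, ⟨c, hc⟩⟩ : Hhat ⋊[φ.comp C.subtype] C) = _
      rw [hPmk, hhat_eq]
    · -- p ∘ j = π
      intro h
      show P (⟨h, 1⟩ : Hhat ⋊[φ.comp C.subtype] C) = _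
      rw [hPmk]
      simp
    · -- kernel of p
      ext x
      constructor
      · intro hx
        induction x using QuotientGroup.induction_on with
        | H x =>
          obtain ⟨h, c⟩ := x
          have hx1 : ((π h : H) : K) * (c : K) = 1 := by
            have h2 : P (⟨h, c⟩ : Hhat ⋊[φ.comp C.subtype] C) = 1 := hx
            rwa [hPmk] at h2
          have hcH : (c : K) ∈ H := by
            have h3 : ((c : K))⁻¹ = ((π h : H) : K) := inv_eq_of_mul_eq_one_left hx1
            have h4 : (c : K) = ((π h : H) : K)⁻¹ := by rw [← h3, inv_inv]
            rw [h4]; exact H.inv_mem (π h).2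
          set d : ↥(C ⊓ H) := ⟨(c : K), ⟨c.2, hcH⟩⟩ with hd
          have hdc : incl d = c := by
            apply Subtype.ext
            rw [Subgroup.coe_inclusion]
          have hfact : (⟨h * θ d, 1⟩ : Hhat ⋊[φ.comp C.subtype] C) *
              (⟨θ d, (incl d)⁻¹⟩ : Hhat ⋊[φ.comp C.subtype] C)⁻¹ = ⟨h, c⟩ := by
            refine SemidirectProduct.ext ?_ ?_
            · show h * θ d * ψ 1 (ψ ((incl d)⁻¹)⁻¹ (θ d)⁻¹) = h
              rw [map_one, MulAut.one_apply, inv_inv, hψ_apply, map_inv, hθfix' _ d]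
              group
            · show 1 * ((incl d)⁻¹)⁻¹ = c
              rw [one_mul, inv_inv, hdc]
          have hmem : h * θ d ∈ ι.range := by
            rw [← hker, MonoidHom.mem_ker]
            have : ((π (h * θ d) : H) : K) = 1 := by
              rw [map_mul, Subgroup.coe_mul, hθ d]
              exact hx1
            exact Subtype.ext this
          refine ⟨h * θ d, hmem, ?_⟩
          show QuotientGroup.mk _ = _
          rw [← hfact, QuotientGroup.mk_mul]
          have hz : QuotientGroup.mk ((⟨θ d, (incl d)⁻¹⟩ :
              Hhat ⋊[φ.comp C.subtype] C)⁻¹) = (1 : (Hhat ⋊[φ.comp C.subtype] C) ⧸ Δ) := by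
            rw [QuotientGroup.eq_one_iff]
            exact Subgroup.inv_mem Δ (hΔmem.mpr ⟨d, rfl⟩)
          rw [hz, mul_one]
          rfl
      · rintro ⟨a, ⟨b, rfl⟩, rfl⟩
        show P (⟨ι b, 1⟩ : Hhat ⋊[φ.comp C.subtype] C) = 1
        rw [hPmk]
        have : ι b ∈ π.ker := by rw [hker]; exact ⟨b, rfl⟩
        rw [MonoidHom.mem_ker] at this
        rw [this]
        simp
      -- it suffices to use the previous part, but we must redo; instead prove directly
    · -- kernel central
      rintro x hx
      induction x using QuotientGroup.induction_on with
      | H x =>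
        obtain ⟨h, c⟩ := x
        have hx1 : ((π h : H) : K) * (c : K) = 1 := by
          have h2 : P (⟨h, c⟩ : Hhat ⋊[φ.comp C.subtype] C) = 1 := hx
          rwa [hPmk] at h2
        have hcH : (c : K) ∈ H := by
          have h3 : ((c : K))⁻¹ = ((π h : H) : K) := inv_eq_of_mul_eq_one_left hx1
          have h4 : (c : K) = ((π h : H) : K)⁻¹ := by rw [← h3, inv_inv]
          rw [h4]; exact H.inv_mem (π h).2
        set d : ↥(C ⊓ H) := ⟨(c : K), ⟨c.2, hcH⟩⟩ with hd
        have hdc : incl d = c := by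
          apply Subtype.ext; rw [Subgroup.coe_inclusion]
        have hfact : (⟨h * θ d, 1⟩ : Hhat ⋊[φ.comp C.subtype] C) *
            (⟨θ d, (incl d)⁻¹⟩ : Hhat ⋊[φ.comp C.subtype] C)⁻¹ = ⟨h, c⟩ := by
          refine SemidirectProduct.ext ?_ ?_
          · show h * θ d * ψ 1 (ψ ((incl d)⁻¹)⁻¹ (θ d)⁻¹) = h
            rw [map_one, MulAut.one_apply, inv_inv, hψ_apply, map_inv, hθfix' _ d]
            group
          · show 1 * ((incl d)⁻¹)⁻¹ = c
            rw [one_mul, inv_inv, hdc]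
        have hmem : h * θ d ∈ π.ker := by
          rw [MonoidHom.mem_ker]
          apply Subtype.ext
          show ((π (h * θ d) : H) : K) = 1
          rw [map_mul, Subgroup.coe_mul, hθ d]
          exact hx1
        have hcen : h * θ d ∈ Subgroup.center Hhat := hcent (hker ▸ hmem)
        rw [Subgroup.mem_center_iff] at hcen ⊢
        intro z
        induction z using QuotientGroup.induction_on with
        | H z =>
          obtain ⟨h', c'⟩ := z
          have heq : (QuotientGroup.mk (⟨h, c⟩ : Hhat ⋊[φ.comp C.subtype] C) :
                (Hhat ⋊[φ.comp C.subtype] C) ⧸ Δ) =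
              QuotientGroup.mk (⟨h * θ d, 1⟩ : Hhat ⋊[φ.comp C.subtype] C) := by
            rw [← hfact, QuotientGroup.mk_mul]
            have hz : QuotientGroup.mk ((⟨θ d, (incl d)⁻¹⟩ :
                Hhat ⋊[φ.comp C.subtype] C)⁻¹) = (1 : (Hhat ⋊[φ.comp C.subtype] C) ⧸ Δ) := by
              rw [QuotientGroup.eq_one_iff]
              exact Subgroup.inv_mem Δ (hΔmem.mpr ⟨d, rfl⟩)
            rw [hz, mul_one]
          have hcomm : (⟨h', c'⟩ : Hhat ⋊[φ.comp C.subtype] C) * ⟨h * θ d, 1⟩ =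
              (⟨h * θ d, 1⟩ : Hhat ⋊[φ.comp C.subtype] C) * ⟨h', c'⟩ := by
            refine SemidirectProduct.ext ?_ ?_
            · show h' * ψ c' (h * θ d) = h * θ d * ψ 1 h'
              rw [map_one, MulAut.one_apply]
              have hfix : ψ c' (h * θ d) = h * θ d := by
                rw [hψ_apply]
                obtain ⟨a, ha⟩ : h * θ d ∈ ι.range := hker ▸ hmem
                rw [← ha, hfixA]
              rw [hfix, hcen h']
            · show c' * 1 = 1 * c'
              rw [mul_one, one_mul]
          show _ * QuotientGroup.mk _ = QuotientGroup.mk _ * _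
          rw [heq, ← QuotientGroup.mk_mul, ← QuotientGroup.mk_mul, hcomm]
    · -- conjugation
      intro xhat h
      induction xhat using QuotientGroup.induction_on with
      | H x =>
        obtain ⟨g', c⟩ := x
        have hp : QuotientGroup.lift _ P hΔker (QuotientGroup.mk
            (⟨g', c⟩ : Hhat ⋊[φ.comp C.subtype] C)) = ((π g' : H) : K) * (c : K) := hPmk g' c
        have hsemi : (⟨g', c⟩ : Hhat ⋊[φ.comp C.subtype] C) * ⟨h, 1⟩ * (⟨g', c⟩)⁻¹ =
            ⟨g' * φ (c : K) h * g'⁻¹, 1⟩ := by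
          have hc1 : (ψ (c * 1)) ((ψ c⁻¹) g'⁻¹) = g'⁻¹ := by
            rw [mul_one, hψ_apply, hψ_apply, Subgroup.coe_inv]
            have h5 := cancel ((c : K))⁻¹ g'⁻¹
            rwa [inv_inv] at h5
          refine SemidirectProduct.ext ?_ ?_
          · show g' * ψ c h * ψ (c * 1) (ψ c⁻¹ g'⁻¹) = g' * φ (c : K) h * g'⁻¹
            rw [hc1, hψ_apply]
          · show c * 1 * c⁻¹ = 1
            rw [mul_one, mul_inv_cancel]
        have hφeq : φ (((π g' : H) : K) * (c : K)) h = g' * φ (c : K) h * g'⁻¹ := by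
          rw [map_mul]
          show φ ((π g' : H) : K) (φ (c : K) h) = _
          rw [hinner]
        show QuotientGroup.mk (⟨g', c⟩ : Hhat ⋊[φ.comp C.subtype] C) *
            QuotientGroup.mk (⟨h, 1⟩ : Hhat ⋊[φ.comp C.subtype] C) *
            (QuotientGroup.mk (⟨g', c⟩ : Hhat ⋊[φ.comp C.subtype] C))⁻¹ = _
        rw [hp, hφeq, ← QuotientGroup.mk_inv, ← QuotientGroup.mk_mul, ← QuotientGroup.mk_mul,
          hsemi]
        rfl
end

section
/- Let K be a finite group, H a normal subgroup of K such that K/H is cyclic, and A a divisible abelian group. Let (Ĥ, ι, π) be a central A-extension of H and let φ : K → Aut(Ĥ) be an action of K on Ĥ that lifts the conjugation action of K on H, fixes A pointwise, and is inner-compatible. Suppose (K̂, j, p) and (K̂', j', p') are both central A-extensions of K containing Ĥ, lifting the inclusion H → K, whose conjugation action induces φ. Then there exists a group isomorphism ψ : K̂ → K̂' such that ψ ∘ j = j' and p' ∘ ψ = p. -/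
/-- Essential uniqueness part of Lemma 4.10: two central `A`-extensions of `K` containing
`Ĥ`, lifting the inclusion `H → K` and whose conjugation action induces `φ`, are isomorphic
compatibly with `j`, `j'`, `p`, `p'`. -/
theorem central_extension_of_cyclic_quotient_unique
    (K : Type*) [Group K] [Finite K]
    (H : Subgroup K) [H.Normal] (hcyc : IsCyclic (K ⧸ H))
    (A : Type*) [CommGroup A]
    (hdiv : ∀ (a : A) (n : ℕ), 0 < n → ∃ b : A, b ^ n = a)
    (Hhat : Type*) [Group Hhat]
    (ι : A →* Hhat) (hι : Function.Injective ι)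
    (hcent : ι.range ≤ Subgroup.center Hhat)
    (π : Hhat →* H) (hπ : Function.Surjective π)
    (hker : π.ker = ι.range)
    (φ : K →* MulAut Hhat)
    (hlift : ∀ (x : K) (h : Hhat), ((π (φ x h) : H) : K) = x * ((π h : H) : K) * x⁻¹)
    (hfixA : ∀ (x : K) (a : A), φ x (ι a) = ι a)
    (hinner : ∀ (h' h : Hhat), φ ((π h' : H) : K) h = h' * h * h'⁻¹)
    (Khat : Type*) [Group Khat] (j : Hhat →* Khat) (p : Khat →* K)
    (hj : Function.Injective j) (hp : Function.Surjective p)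
    (hpj : ∀ h : Hhat, p (j h) = ((π h : H) : K))
    (hpker : p.ker = Subgroup.map j ι.range)
    (hpcent : p.ker ≤ Subgroup.center Khat)
    (hconj : ∀ (xhat : Khat) (h : Hhat), xhat * j h * xhat⁻¹ = j (φ (p xhat) h))
    (Khat' : Type*) [Group Khat'] (j' : Hhat →* Khat') (p' : Khat' →* K)
    (hj' : Function.Injective j') (hp' : Function.Surjective p')
    (hpj' : ∀ h : Hhat, p' (j' h) = ((π h : H) : K))
    (hpker' : p'.ker = Subgroup.map j' ι.range)
    (hpcent' : p'.ker ≤ Subgroup.center Khat')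
    (hconj' : ∀ (xhat : Khat') (h : Hhat), xhat * j' h * xhat⁻¹ = j' (φ (p' xhat) h)) :
    ∃ ψ : Khat ≃* Khat',
      (∀ h : Hhat, ψ (j h) = j' h) ∧ (∀ xhat : Khat, p' (ψ xhat) = p xhat) := by
  haveI finq : Finite (K ⧸ H) := Quotient.finite _
  obtain ⟨c, hc⟩ := hcyc.exists_generator
  obtain ⟨g, hg⟩ := QuotientGroup.mk_surjective c
  set n : ℕ := orderOf c with hndef
  have hn : 0 < n := orderOf_pos c
  have hmkzpow : ∀ m : ℤ, (QuotientGroup.mk (g ^ m) : K ⧸ H) = c ^ m := by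
    intro m
    rw [← hg]
    exact map_zpow (QuotientGroup.mk' H) g m
  have hgn : g ^ n ∈ H := by
    rw [← QuotientGroup.eq_one_iff]
    have : (QuotientGroup.mk (g ^ n) : K ⧸ H) = c ^ n := by
      rw [← hg]; exact map_pow (QuotientGroup.mk' H) g n
    rw [this, hndef, pow_orderOf_eq_one]
  have hdec : ∀ x : K, ∃ m : ℤ, g ^ (-m) * x ∈ H := by
    intro x
    obtain ⟨m, hm⟩ := Subgroup.mem_zpowers_iff.mp (hc (QuotientGroup.mk x))
    refine ⟨m, ?_⟩
    rw [← QuotientGroup.eq_one_iff, QuotientGroup.mk_mul, hmkzpow, ← hm, ← zpow_add]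
    simp
  -- elements of Khat mapping into H come from Hhat
  have hmemj : ∀ y : Khat, p y ∈ H → ∃ h : Hhat, j h = y := by
    intro y hy
    obtain ⟨h1, hh1⟩ := hπ ⟨p y, hy⟩
    have hk : y * (j h1)⁻¹ ∈ p.ker := by
      rw [MonoidHom.mem_ker, map_mul, map_inv, hpj, hh1]
      simp
    rw [hpker] at hk
    obtain ⟨z, hz, hzeq⟩ := hk
    exact ⟨z * h1, by rw [map_mul, hzeq]; group⟩
  have hmemj' : ∀ y : Khat', p' y ∈ H → ∃ h : Hhat, j' h = y := by
    intro y hy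
    obtain ⟨h1, hh1⟩ := hπ ⟨p' y, hy⟩
    have hk : y * (j' h1)⁻¹ ∈ p'.ker := by
      rw [MonoidHom.mem_ker, map_mul, map_inv, hpj', hh1]
      simp
    rw [hpker'] at hk
    obtain ⟨z, hz, hzeq⟩ := hk
    exact ⟨z * h1, by rw [map_mul, hzeq]; group⟩
  -- lift g to Khat and Khat'
  obtain ⟨ghat, hghat⟩ := hp g
  obtain ⟨h0, hh0⟩ := hmemj (ghat ^ n) (by rw [map_pow, hghat]; exact hgn)
  obtain ⟨g0', hg0'⟩ := hp' g
  obtain ⟨h0'', hh0''⟩ := hmemj' (g0' ^ n) (by rw [map_pow, hg0']; exact hgn)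
  have hπh0 : ((π h0 : H) : K) = g ^ n := by rw [← hpj, hh0, map_pow, hghat]
  have hπh0'' : ((π h0'' : H) : K) = g ^ n := by rw [← hpj', hh0'', map_pow, hg0']
  have hdiff : h0'' * h0⁻¹ ∈ ι.range := by
    rw [← hker, MonoidHom.mem_ker, map_mul, map_inv]
    have : π h0'' = π h0 := Subtype.ext (hπh0''.trans hπh0.symm)
    rw [this]; simp
  obtain ⟨a, ha⟩ := hdiff
  obtain ⟨b, hb⟩ := hdiv a⁻¹ n hn
  have hbker : j' (ι b) ∈ p'.ker := by
    have hb1 : ι b ∈ π.ker := by rw [hker]; exact ⟨b, rfl⟩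
    rw [MonoidHom.mem_ker] at hb1 ⊢
    rw [hpj', hb1]
    simp
  have hbcent : j' (ι b) ∈ Subgroup.center Khat' := hpcent' hbker
  set ghat' : Khat' := g0' * j' (ι b) with hghat'def
  have hghat' : p' ghat' = g := by
    rw [hghat'def, map_mul, hg0', MonoidHom.mem_ker.mp hbker, mul_one]
  have hgn' : ghat' ^ n = j' h0 := by
    have hcomm : Commute g0' (j' (ι b)) := Subgroup.mem_center_iff.mp hbcent g0'
    rw [hghat'def, hcomm.mul_pow, ← hh0'', ← map_pow, ← map_mul]
    congr 1
    have hh0''eq : h0'' = ι a * h0 := by rw [ha]; group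
    rw [hh0''eq, ← map_pow ι, hb, map_inv]
    have hcan : Commute h0 (ι a) := Subgroup.mem_center_iff.mp (hcent ⟨a, rfl⟩) h0
    rw [mul_assoc, hcan.inv_right.eq]
    group
  -- commutation relations
  have hswap : ∀ (m : ℤ) (h : Hhat), j h * ghat ^ m = ghat ^ m * j (φ (g ^ (-m)) h) := by
    intro m h
    have hc1 := hconj (ghat ^ (-m)) h
    rw [map_zpow, hghat] at hc1
    rw [← hc1]; group
  have hswap' : ∀ (m : ℤ) (h : Hhat), j' h * ghat' ^ m = ghat' ^ m * j' (φ (g ^ (-m)) h) := by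
    intro m h
    have hc1 := hconj' (ghat' ^ (-m)) h
    rw [map_zpow, hghat'] at hc1
    rw [← hc1]; group
  -- the graph subgroup
  let Γ : Subgroup (Khat × Khat') :=
    { carrier := {z | ∃ (m : ℤ) (h : Hhat), z.1 = ghat ^ m * j h ∧ z.2 = ghat' ^ m * j' h}
      one_mem' := ⟨0, 1, by simp, by simp⟩
      mul_mem' := by
        intro z w hz hw
        obtain ⟨m, h1, hz1, hz2⟩ := hz
        obtain ⟨k, h2, hw1, hw2⟩ := hw
        refine ⟨m + k, φ (g ^ (-k)) h1 * h2, ?_, ?_⟩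
        · show z.1 * w.1 = _
          rw [hz1, hw1, map_mul, zpow_add, mul_assoc (ghat ^ m), ← mul_assoc (j h1),
            hswap k h1]
          group
        · show z.2 * w.2 = _
          rw [hz2, hw2, map_mul, zpow_add, mul_assoc (ghat' ^ m), ← mul_assoc (j' h1),
            hswap' k h1]
          group
      inv_mem' := by
        intro z hz
        obtain ⟨m, h, hz1, hz2⟩ := hz
        refine ⟨-m, φ (g ^ (-(-m))) h⁻¹, ?_, ?_⟩
        · show z.1⁻¹ = _
          rw [hz1, mul_inv_rev, ← map_inv, ← zpow_neg, hswap (-m) h⁻¹]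
        · show z.2⁻¹ = _
          rw [hz2, mul_inv_rev, ← map_inv, ← zpow_neg, hswap' (-m) h⁻¹] }
  -- triviality transfer
  have htriv1 : ∀ (m : ℤ) (h : Hhat), ghat ^ m * j h = 1 → ghat' ^ m * j' h = 1 := by
    intro m h hone
    have hγm : ghat ^ m = (j h)⁻¹ := mul_eq_one_iff_eq_inv.mp hone
    have hgmH : g ^ m ∈ H := by
      have hp1 := congrArg p hγm
      rw [map_zpow, hghat, map_inv, hpj] at hp1
      rw [hp1]; exact H.inv_mem (π h).2
    have hdvd : (n : ℤ) ∣ m := by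
      have hcm : c ^ m = 1 := by
        rw [← hmkzpow m, QuotientGroup.eq_one_iff]; exact hgmH
      exact orderOf_dvd_iff_zpow_eq_one.mpr hcm
    obtain ⟨q, hq⟩ := hdvd
    have hgq : ghat ^ m = j (h0 ^ q) :=
      calc ghat ^ m = (ghat ^ (n : ℕ)) ^ q := by rw [hq, ← zpow_natCast, ← zpow_mul]
      _ = j (h0 ^ q) := by rw [← hh0, ← map_zpow]
    have hh : h0 ^ q * h = 1 := by
      apply hj
      rw [map_mul, map_one, ← hgq]
      exact hone
    have hgq' : ghat' ^ m = j' (h0 ^ q) :=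
      calc ghat' ^ m = (ghat' ^ (n : ℕ)) ^ q := by rw [hq, ← zpow_natCast, ← zpow_mul]
      _ = j' (h0 ^ q) := by rw [hgn', ← map_zpow]
    rw [hgq', ← map_mul, hh, map_one]
  have htriv2 : ∀ (m : ℤ) (h : Hhat), ghat' ^ m * j' h = 1 → ghat ^ m * j h = 1 := by
    intro m h hone
    have hγm : ghat' ^ m = (j' h)⁻¹ := mul_eq_one_iff_eq_inv.mp hone
    have hgmH : g ^ m ∈ H := by
      have hp1 := congrArg p' hγm
      rw [map_zpow, hghat', map_inv, hpj'] at hp1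
      rw [hp1]; exact H.inv_mem (π h).2
    have hdvd : (n : ℤ) ∣ m := by
      have hcm : c ^ m = 1 := by
        rw [← hmkzpow m, QuotientGroup.eq_one_iff]; exact hgmH
      exact orderOf_dvd_iff_zpow_eq_one.mpr hcm
    obtain ⟨q, hq⟩ := hdvd
    have hgq' : ghat' ^ m = j' (h0 ^ q) :=
      calc ghat' ^ m = (ghat' ^ (n : ℕ)) ^ q := by rw [hq, ← zpow_natCast, ← zpow_mul]
      _ = j' (h0 ^ q) := by rw [hgn', ← map_zpow]
    have hh : h0 ^ q * h = 1 := by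
      apply hj'
      rw [map_mul, map_one, ← hgq']
      exact hone
    have hgq : ghat ^ m = j (h0 ^ q) :=
      calc ghat ^ m = (ghat ^ (n : ℕ)) ^ q := by rw [hq, ← zpow_natCast, ← zpow_mul]
      _ = j (h0 ^ q) := by rw [← hh0, ← map_zpow]
    rw [hgq, ← map_mul, hh, map_one]
  -- surjectivity decompositions
  have hsurj1 : ∀ x : Khat, ∃ (m : ℤ) (h : Hhat), x = ghat ^ m * j h := by
    intro x
    obtain ⟨m, hm⟩ := hdec (p x)
    obtain ⟨h, hh⟩ := hmemj (ghat ^ (-m) * x) (by rw [map_mul, map_zpow, hghat]; exact hm)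
    exact ⟨m, h, by rw [hh]; group⟩
  have hsurj2 : ∀ x : Khat', ∃ (m : ℤ) (h : Hhat), x = ghat' ^ m * j' h := by
    intro x
    obtain ⟨m, hm⟩ := hdec (p' x)
    obtain ⟨h, hh⟩ := hmemj' (ghat' ^ (-m) * x) (by rw [map_mul, map_zpow, hghat']; exact hm)
    exact ⟨m, h, by rw [hh]; group⟩
  -- projections
  let f₁ : Γ →* Khat := (MonoidHom.fst Khat Khat').comp Γ.subtype
  let f₂ : Γ →* Khat' := (MonoidHom.snd Khat Khat').comp Γ.subtype
  have hbij1 : Function.Bijective f₁ := by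
    constructor
    · intro x y hxy
      have hxy1 : (x : Khat × Khat').1 = (y : Khat × Khat').1 := hxy
      obtain ⟨m, h, e2, e3⟩ := mul_mem x.2 (inv_mem y.2)
      have e4 : ghat ^ m * j h = 1 := by
        rw [← e2]
        show (x : Khat × Khat').1 * ((y : Khat × Khat').1)⁻¹ = 1
        rw [hxy1]; simp
      have e5 := htriv1 m h e4
      have e6 : (x : Khat × Khat').2 = (y : Khat × Khat').2 := by
        have e7 : (x : Khat × Khat').2 * ((y : Khat × Khat').2)⁻¹ = 1 := e3.trans e5
        exact mul_inv_eq_one.mp e7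
      exact Subtype.ext (Prod.ext hxy1 e6)
    · intro x
      obtain ⟨m, h, hx⟩ := hsurj1 x
      exact ⟨⟨(x, ghat' ^ m * j' h), m, h, hx, rfl⟩, rfl⟩
  have hbij2 : Function.Bijective f₂ := by
    constructor
    · intro x y hxy
      have hxy2 : (x : Khat × Khat').2 = (y : Khat × Khat').2 := hxy
      obtain ⟨m, h, e2, e3⟩ := mul_mem x.2 (inv_mem y.2)
      have e4 : ghat' ^ m * j' h = 1 := by
        rw [← e3]
        show (x : Khat × Khat').2 * ((y : Khat × Khat').2)⁻¹ = 1
        rw [hxy2]; simp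
      have e5 := htriv2 m h e4
      have e6 : (x : Khat × Khat').1 = (y : Khat × Khat').1 := by
        have e7 : (x : Khat × Khat').1 * ((y : Khat × Khat').1)⁻¹ = 1 := e2.trans e5
        exact mul_inv_eq_one.mp e7
      exact Subtype.ext (Prod.ext e6 hxy2)
    · intro x
      obtain ⟨m, h, hx⟩ := hsurj2 x
      exact ⟨⟨(ghat ^ m * j h, x), m, h, rfl, hx⟩, rfl⟩
  let e₁ := MulEquiv.ofBijective f₁ hbij1
  let e₂ := MulEquiv.ofBijective f₂ hbij2
  refine ⟨e₁.symm.trans e₂, ?_, ?_⟩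
  · intro h
    have hmem : ((j h, j' h) : Khat × Khat') ∈ Γ := ⟨0, h, by simp, by simp⟩
    have h1 : e₁ ⟨(j h, j' h), hmem⟩ = j h := rfl
    have h2 : e₁.symm (j h) = ⟨(j h, j' h), hmem⟩ := by
      conv_lhs => rw [← h1]
      exact e₁.symm_apply_apply _
    show e₂ (e₁.symm (j h)) = j' h
    rw [h2]; rfl
  · intro x
    show p' (e₂ (e₁.symm x)) = p x
    have h4 : ((e₁.symm x : Khat × Khat')).1 = x := e₁.apply_symm_apply x
    obtain ⟨m, h, e5, e6⟩ := (e₁.symm x).2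
    have h3 : p' (e₂ (e₁.symm x)) = p' ((e₁.symm x : Khat × Khat').2) := rfl
    rw [h3, e6, ← h4, e5]
    simp [map_mul, map_zpow, hghat, hghat', hpj, hpj']
end

section
/- Let K be a finite group, H a normal subgroup of K such that K/H is cyclic, and A a divisible abelian group. Let (Ĥ, ι, π) be a central A-extension of H, let φ : K → Aut(Ĥ) be an action of K on Ĥ that lifts the conjugation action of K on H, fixes A pointwise, and is inner-compatible, and let (K̂, j, p) be a central A-extension of K containing Ĥ, lifting the inclusion H → K, whose conjugation action induces φ. Let τ be an automorphism of K with τ(H) = H, and let σ̂ be an automorphism of Ĥ such that π(σ̂(ĥ)) = τ(π(ĥ)) for all ĥ ∈ Ĥ, σ̂ fixes ι(A) pointwise, and σ̂(φ_x(ĥ)) = φ_{τ(x)}(σ̂(ĥ)) for all x ∈ K and ĥ ∈ Ĥ. Then there exists an automorphism τ̂ of K̂ such that τ̂ ∘ j = j ∘ σ̂ and p ∘ τ̂ = τ ∘ p. -/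
/-- Final assertion of Lemma 4.10: an automorphism `τ` of `K` stabilizing `H` which lifts
equivariantly to an automorphism `σ̂` of `Ĥ` lifts to an automorphism of `K̂` extending `σ̂`. -/
theorem central_extension_lift_automorphism
    (K : Type*) [Group K] [Finite K]
    (H : Subgroup K) [H.Normal] (hcyc : IsCyclic (K ⧸ H))
    (A : Type*) [CommGroup A]
    (hdiv : ∀ (a : A) (n : ℕ), 0 < n → ∃ b : A, b ^ n = a)
    (Hhat : Type*) [Group Hhat]
    (ι : A →* Hhat) (hι : Function.Injective ι)
    (hcent : ι.range ≤ Subgroup.center Hhat)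
    (π : Hhat →* H) (hπ : Function.Surjective π)
    (hker : π.ker = ι.range)
    (φ : K →* MulAut Hhat)
    (hlift : ∀ (x : K) (h : Hhat), ((π (φ x h) : H) : K) = x * ((π h : H) : K) * x⁻¹)
    (hfixA : ∀ (x : K) (a : A), φ x (ι a) = ι a)
    (hinner : ∀ (h' h : Hhat), φ ((π h' : H) : K) h = h' * h * h'⁻¹)
    (Khat : Type*) [Group Khat] (j : Hhat →* Khat) (p : Khat →* K)
    (hj : Function.Injective j) (hp : Function.Surjective p)
    (hpj : ∀ h : Hhat, p (j h) = ((π h : H) : K))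
    (hpker : p.ker = Subgroup.map j ι.range)
    (hpcent : p.ker ≤ Subgroup.center Khat)
    (hconj : ∀ (xhat : Khat) (h : Hhat), xhat * j h * xhat⁻¹ = j (φ (p xhat) h))
    (τ : MulAut K) (hτH : H.map τ.toMonoidHom = H)
    (σhat : MulAut Hhat)
    (hσπ : ∀ h : Hhat, ((π (σhat h) : H) : K) = τ ((π h : H) : K))
    (hσA : ∀ a : A, σhat (ι a) = ι a)
    (hσφ : ∀ (x : K) (h : Hhat), σhat (φ x h) = φ (τ x) (σhat h)) :
    ∃ τhat : MulAut Khat,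
      (∀ h : Hhat, τhat (j h) = j (σhat h)) ∧
      (∀ xhat : Khat, p (τhat xhat) = τ (p xhat)) := by
  classical
  obtain ⟨g, hg⟩ := hcyc.exists_generator
  obtain ⟨t, rfl⟩ := QuotientGroup.mk_surjective g
  set n : ℕ := orderOf ((t : K ⧸ H)) with hn
  have hnpos : 0 < n := orderOf_pos _
  have hdvd : ∀ m : ℤ, t ^ m ∈ H ↔ (n : ℤ) ∣ m := by
    intro m
    rw [← QuotientGroup.eq_one_iff]
    have h1 : ((t ^ m : K) : K ⧸ H) = ((t : K ⧸ H)) ^ m :=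
      map_zpow (QuotientGroup.mk' H) t m
    rw [h1, hn]
    exact orderOf_dvd_iff_zpow_eq_one.symm
  have htnH : t ^ n ∈ H := by
    have h1 : t ^ (n : ℤ) ∈ H := (hdvd n).mpr dvd_rfl
    rwa [zpow_natCast] at h1
  have hτmem : ∀ x ∈ H, τ x ∈ H := by
    intro x hx
    rw [← hτH]
    exact ⟨x, hx, rfl⟩
  have hjH : ∀ x : Khat, p x ∈ H → ∃ h : Hhat, j h = x := by
    intro x hx
    obtain ⟨h1, hh1⟩ := hπ ⟨p x, hx⟩
    have hk : x * (j h1)⁻¹ ∈ p.ker := by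
      rw [MonoidHom.mem_ker, map_mul, map_inv, hpj, hh1]
      simp
    rw [hpker] at hk
    obtain ⟨h2, _, hh2⟩ := hk
    exact ⟨h2 * h1, by rw [map_mul, hh2, inv_mul_cancel_right]⟩
  obtain ⟨that, hthat⟩ := hp t
  obtain ⟨h0, hh0⟩ := hjH (that ^ n) (by rw [map_pow, hthat]; exact htnH)
  obtain ⟨s0, hs0⟩ := hp (τ t)
  obtain ⟨h1, hh1⟩ := hjH (s0 ^ n) (by
    rw [map_pow, hs0, ← map_pow]
    exact hτmem _ htnH)
  have hπeq : π h1 = π (σhat h0) := by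
    apply Subtype.coe_injective
    have e1 : ((π h1 : H) : K) = τ (t ^ n) := by
      rw [← hpj, hh1, map_pow, hs0, ← map_pow]
    have e2 : ((π (σhat h0) : H) : K) = τ (t ^ n) := by
      rw [hσπ, ← hpj, hh0, map_pow, hthat]
    exact e1.trans e2.symm
  have hkerel : h1⁻¹ * σhat h0 ∈ ι.range := by
    rw [← hker, MonoidHom.mem_ker, map_mul, map_inv, hπeq]
    simp
  obtain ⟨a, ha⟩ := hkerel
  obtain ⟨b, hb⟩ := hdiv a n hnpos
  set s : Khat := s0 * j (ι b) with hsdef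
  have hπιb : π (ι b) = 1 := by
    have : ι b ∈ π.ker := by rw [hker]; exact ⟨b, rfl⟩
    exact this
  have hpjιb : p (j (ι b)) = 1 := by
    rw [hpj, hπιb]
    rfl
  have hps : p s = τ t := by
    rw [hsdef, map_mul, hs0, hpjιb, mul_one]
  have hbcent : j (ι b) ∈ Subgroup.center Khat :=
    hpcent (by rw [MonoidHom.mem_ker]; exact hpjιb)
  have hsn : s ^ n = j (σhat h0) := by
    have hc : Commute s0 (j (ι b)) := (Subgroup.mem_center_iff.mp hbcent s0)
    rw [hsdef, hc.mul_pow, ← hh1, ← map_pow j, ← map_pow ι, hb, ← map_mul, ha,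
      mul_inv_cancel_left]
  -- conjugation formulas
  have hc1 : ∀ (k : ℤ) (h : Hhat), that ^ k * j h = j (φ (t ^ k) h) * that ^ k := by
    intro k h
    have hcj := hconj (that ^ k) h
    rw [map_zpow, hthat] at hcj
    rw [← hcj]
    group
  set J2 : Hhat →* Khat := j.comp σhat.toMonoidHom with hJ2
  have hJ2a : ∀ h : Hhat, J2 h = j (σhat h) := fun _ => rfl
  have hc2 : ∀ (k : ℤ) (h : Hhat), s ^ k * J2 h = J2 (φ (t ^ k) h) * s ^ k := by
    intro k h
    have hcj := hconj (s ^ k) (σhat h)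
    rw [map_zpow, hps] at hcj
    have h2 : φ ((τ t) ^ k) (σhat h) = σhat (φ (t ^ k) h) := by
      rw [← map_zpow, ← hσφ]
    rw [h2] at hcj
    rw [hJ2a, hJ2a, ← hcj]
    group
  -- general computation lemmas
  have hswap : ∀ (u : Khat) (J : Hhat →* Khat),
      (∀ (k : ℤ) (h : Hhat), u ^ k * J h = J (φ (t ^ k) h) * u ^ k) →
      ∀ (k : ℤ) (h : Hhat), J h * u ^ k = u ^ k * J (φ (t ^ (-k)) h) := by
    intro u J hc k h
    have hck := hc (-k) h
    calc J h * u ^ k = u ^ k * (u ^ (-k) * J h * u ^ k) := by group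
      _ = u ^ k * (J (φ (t ^ (-k)) h) * u ^ (-k) * u ^ k) := by rw [hck]
      _ = u ^ k * J (φ (t ^ (-k)) h) := by group
  have keymul : ∀ (u : Khat) (J : Hhat →* Khat),
      (∀ (k : ℤ) (h : Hhat), u ^ k * J h = J (φ (t ^ k) h) * u ^ k) →
      ∀ (m m' : ℤ) (h h' : Hhat),
        (u ^ m * J h) * (u ^ m' * J h') = u ^ (m + m') * J (φ (t ^ (-m')) h * h') := by
    intro u J hc m m' h h'
    rw [map_mul]
    calc (u ^ m * J h) * (u ^ m' * J h')
        = u ^ m * (J h * u ^ m') * J h' := by group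
      _ = u ^ m * (u ^ m' * J (φ (t ^ (-m')) h)) * J h' := by rw [hswap u J hc]
      _ = u ^ (m + m') * (J (φ (t ^ (-m')) h) * J h') := by rw [zpow_add]; group
  have keyinv : ∀ (u : Khat) (J : Hhat →* Khat),
      (∀ (k : ℤ) (h : Hhat), u ^ k * J h = J (φ (t ^ k) h) * u ^ k) →
      ∀ (m : ℤ) (h : Hhat), (u ^ m * J h)⁻¹ = u ^ (-m) * J (φ (t ^ m) h⁻¹) := by
    intro u J hc m h
    have hsw := hswap u J hc (-m) h⁻¹
    rw [neg_neg] at hsw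
    rw [← hsw, map_inv]
    group
  -- the graph subgroup
  let S : Subgroup (Khat × Khat) :=
    { carrier := {z | ∃ (m : ℤ) (h : Hhat), z.1 = that ^ m * j h ∧ z.2 = s ^ m * j (σhat h)}
      one_mem' := ⟨0, 1, by simp, by simp⟩
      mul_mem' := by
        rintro ⟨x1, x2⟩ ⟨y1, y2⟩ ⟨m, h, e1, e2⟩ ⟨m', h', f1, f2⟩
        dsimp only at e1 e2 f1 f2
        subst e1; subst e2; subst f1; subst f2
        refine ⟨m + m', φ (t ^ (-m')) h * h', ?_, ?_⟩
        · exact keymul that j hc1 m m' h h'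
        · exact keymul s J2 hc2 m m' h h'
      inv_mem' := by
        rintro ⟨x1, x2⟩ ⟨m, h, e1, e2⟩
        dsimp only at e1 e2
        subst e1; subst e2
        refine ⟨-m, φ (t ^ m) h⁻¹, ?_, ?_⟩
        · exact keyinv that j hc1 m h
        · exact keyinv s J2 hc2 m h }
  have hpF1 : ∀ (m : ℤ) (h : Hhat), p (that ^ m * j h) = t ^ m * ((π h : H) : K) := by
    intro m h
    rw [map_mul, map_zpow, hthat, hpj]
  have hpF2 : ∀ (m : ℤ) (h : Hhat),
      p (s ^ m * j (σhat h)) = τ (t ^ m * ((π h : H) : K)) := by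
    intro m h
    rw [map_mul, map_zpow, hps, hpj, hσπ, ← map_zpow, ← map_mul]
  -- key triviality statement
  have hzero : ∀ (m : ℤ) (h : Hhat), t ^ m * ((π h : H) : K) = 1 →
      that ^ m * j h = s ^ m * j (σhat h) := by
    intro m h hmh
    have htm : t ^ m ∈ H := by
      have h1 : t ^ m = (((π h : H) : K))⁻¹ := by
        rw [eq_inv_iff_mul_eq_one]; exact hmh
      rw [h1]; exact H.inv_mem (π h).2
    obtain ⟨q, hq⟩ := (hdvd m).mp htm
    have hπh0 : ((π h0 : H) : K) = t ^ n := by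
      rw [← hpj, hh0, map_pow, hthat]
    have hthatm : that ^ m = j (h0 ^ q) := by
      rw [hq, zpow_mul, zpow_natCast, ← hh0, map_zpow j h0 q]
    have hsm : s ^ m = j (σhat (h0 ^ q)) := by
      rw [hq, zpow_mul, zpow_natCast, hsn, map_zpow σhat h0 q, map_zpow j _ q]
    have hπ1 : π (h0 ^ q * h) = 1 := by
      have hco : ((π (h0 ^ q * h) : H) : K) = t ^ m * ((π h : H) : K) := by
        rw [map_mul, map_zpow]
        push_cast
        rw [hπh0, ← zpow_natCast t n, ← zpow_mul, ← hq]
      exact OneMemClass.coe_eq_one.mp (hco.trans hmh)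
    have hrange : h0 ^ q * h ∈ ι.range := by
      rw [← hker, MonoidHom.mem_ker]; exact hπ1
    obtain ⟨a', ha'⟩ := hrange
    have hfix : σhat (h0 ^ q * h) = h0 ^ q * h := by
      rw [← ha', hσA]
    rw [hthatm, hsm, ← map_mul j, ← map_mul j, ← map_mul σhat, hfix]
  -- elements of S with a trivial coordinate are trivial
  have hfix1 : ∀ z : Khat × Khat, z ∈ S → z.1 = 1 → z = 1 := by
    rintro ⟨x1, x2⟩ ⟨m, h, e1, e2⟩ hx1
    dsimp only at e1 e2 hx1 ⊢
    subst e1; subst e2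
    have h1 : t ^ m * ((π h : H) : K) = 1 := by
      rw [← hpF1, hx1, map_one]
    have h2 := hzero m h h1
    exact Prod.ext hx1 (h2 ▸ hx1)
  have hfix2 : ∀ z : Khat × Khat, z ∈ S → z.2 = 1 → z = 1 := by
    rintro ⟨x1, x2⟩ ⟨m, h, e1, e2⟩ hx2
    dsimp only at e1 e2 hx2 ⊢
    subst e1; subst e2
    have h1 : t ^ m * ((π h : H) : K) = 1 := by
      have := hpF2 m h
      rw [hx2, map_one] at this
      exact τ.injective (by rw [← this, map_one])
    have h2 := hzero m h h1
    exact Prod.ext (by rw [h2]; exact hx2) hx2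
  -- the two projections restricted to S
  let e1 : S →* Khat := (MonoidHom.fst Khat Khat).comp S.subtype
  let e2 : S →* Khat := (MonoidHom.snd Khat Khat).comp S.subtype
  have he1 : Function.Bijective e1 := by
    constructor
    · rw [injective_iff_map_eq_one]
      intro z hz
      have hm := hfix1 (z : Khat × Khat) z.2 hz
      exact Subtype.ext hm
    · intro x
      obtain ⟨m, hm⟩ := Subgroup.mem_zpowers_iff.mp (hg ((p x : K) : K ⧸ H))
      have hmem : p (that ^ (-m) * x) ∈ H := by
        rw [← QuotientGroup.eq_one_iff, map_mul, map_zpow, hthat]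
        have : ((t ^ (-m) * p x : K) : K ⧸ H)
            = ((t : K ⧸ H)) ^ (-m) * (((p x : K)) : K ⧸ H) :=
          map_mul (QuotientGroup.mk' H) _ _ |>.trans
            (by rw [map_zpow (QuotientGroup.mk' H)]; rfl)
        rw [this, ← hm]
        group
      obtain ⟨h, hh⟩ := hjH _ hmem
      refine ⟨⟨(x, s ^ m * j (σhat h)), m, h, ?_, rfl⟩, rfl⟩
      dsimp only
      rw [hh]
      group
  have he2 : Function.Bijective e2 := by
    constructor
    · rw [injective_iff_map_eq_one]
      intro z hz
      have hm := hfix2 (z : Khat × Khat) z.2 hz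
      exact Subtype.ext hm
    · intro y
      obtain ⟨m, hm⟩ :=
        Subgroup.mem_zpowers_iff.mp (hg ((τ.symm (p y) : K) : K ⧸ H))
      have hmemH : t ^ (-m) * τ.symm (p y) ∈ H := by
        rw [← QuotientGroup.eq_one_iff]
        have : ((t ^ (-m) * τ.symm (p y) : K) : K ⧸ H)
            = ((t : K ⧸ H)) ^ (-m) * ((τ.symm (p y) : K) : K ⧸ H) :=
          map_mul (QuotientGroup.mk' H) _ _ |>.trans
            (by rw [map_zpow (QuotientGroup.mk' H)]; rfl)
        rw [this, ← hm]
        group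
      have hmem : p (s ^ (-m) * y) ∈ H := by
        have hτm := hτmem _ hmemH
        rw [map_mul, MulEquiv.apply_symm_apply, map_zpow] at hτm
        rw [map_mul, map_zpow, hps]
        exact hτm
      obtain ⟨h, hh⟩ := hjH _ hmem
      refine ⟨⟨(that ^ m * j (σhat.symm h), y), m, σhat.symm h, rfl, ?_⟩, rfl⟩
      dsimp only
      rw [MulEquiv.apply_symm_apply, hh]
      group
  let E1 := MulEquiv.ofBijective e1 he1
  let E2 := MulEquiv.ofBijective e2 he2
  refine ⟨E1.symm.trans E2, ?_, ?_⟩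
  · intro h
    have hmem : ((j h, j (σhat h)) : Khat × Khat) ∈ S := ⟨0, h, by simp, by simp⟩
    have h1 : E1 ⟨(j h, j (σhat h)), hmem⟩ = j h := rfl
    have h2 : E1.symm (j h) = ⟨(j h, j (σhat h)), hmem⟩ := by
      rw [MulEquiv.symm_apply_eq]
      exact h1.symm
    show E2 (E1.symm (j h)) = j (σhat h)
    rw [h2]
    rfl
  · intro x
    show p (E2 (E1.symm x)) = τ (p x)
    obtain ⟨m, h, f1, f2⟩ := (E1.symm x).2
    have hx : ((E1.symm x : S) : Khat × Khat).1 = x := E1.apply_symm_apply x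
    have hE2 : E2 (E1.symm x) = ((E1.symm x : S) : Khat × Khat).2 := rfl
    rw [hE2, f2, hpF2 m h]
    congr 1
    rw [← hpF1 m h, ← f1, hx]
end

section
/- Let C be an abelian group acting on a group Ĥ via a homomorphism φ : C → Aut(Ĥ), let D be a subgroup of C, and let θ : D → Ĥ be a group homomorphism such that (i) every element of θ(D) is fixed by φ_c for every c ∈ C, and (ii) for every y ∈ D the automorphism φ_y is conjugation by θ(y), i.e. φ_y(ĥ) = θ(y)·ĥ·θ(y)⁻¹ for all ĥ ∈ Ĥ. Then the set Δ*(D) = {(θ(y), y⁻¹) : y ∈ D} is a subgroup of the semidirect product Ĥ ⋊_φ C, and Δ*(D) is contained in the center of Ĥ ⋊_φ C. -/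
/-- The "inverse diagonal" `Δ*(D) = {(θ(y), y⁻¹) : y ∈ D}` (formula 4.10.1 of the paper)
is a subgroup of the semidirect product `Ĥ ⋊[φ] C`, contained in its center. -/
theorem inverse_diagonal_is_central_subgroup
    (C : Type*) [CommGroup C] (Hhat : Type*) [Group Hhat]
    (φ : C →* MulAut Hhat) (D : Subgroup C) (θ : ↥D →* Hhat)
    (hfix : ∀ (c : C) (y : ↥D), φ c (θ y) = θ y)
    (hconj : ∀ (y : ↥D) (h : Hhat), φ (y : C) h = θ y * h * (θ y)⁻¹) :
    ∃ Δ : Subgroup (Hhat ⋊[φ] C),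
      (Δ : Set (Hhat ⋊[φ] C)) =
        {x | ∃ y : ↥D, x = ⟨θ y, (y : C)⁻¹⟩} ∧
      Δ ≤ Subgroup.center (Hhat ⋊[φ] C) := by
  let f : ↥D →* (Hhat ⋊[φ] C) :=
    { toFun := fun y => ⟨θ y, (y : C)⁻¹⟩
      map_one' := by ext <;> simp
      map_mul' := by
        intro y₁ y₂
        ext
        · show θ (y₁ * y₂) = θ y₁ * φ ((y₁ : C)⁻¹) (θ y₂)
          rw [map_mul, hfix]
        · show ((y₁ * y₂ : ↥D) : C)⁻¹ = (y₁ : C)⁻¹ * (y₂ : C)⁻¹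
          push_cast
          rw [mul_inv, mul_comm] }
  refine ⟨f.range, ?_, ?_⟩
  · ext x
    constructor
    · rintro ⟨y, rfl⟩; exact ⟨y, rfl⟩
    · rintro ⟨y, rfl⟩; exact ⟨y, rfl⟩
  · rintro x ⟨y, rfl⟩
    rw [Subgroup.mem_center_iff]
    intro g
    have key : φ ((y : C)⁻¹) g.left = (θ y)⁻¹ * g.left * θ y := by
      rw [map_inv, MulAut.inv_def, MulEquiv.symm_apply_eq, hconj]
      group
    ext
    · show g.left * φ g.right (θ y) = θ y * φ ((y : C)⁻¹) g.left
      rw [hfix, key]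
      group
    · show g.right * (y : C)⁻¹ = (y : C)⁻¹ * g.right
      exact mul_comm _ _
end
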